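/- arXiv:2004.04515 — 2 statements merged into one kernel-verified Lean document; each statement's English description precedes it below -/
import Mathlib

section
/- Let λ₁, λ₂ ≥ 0, a₁, a₂, μ₁, μ₂ > 0 with λ₂μ₁ ≠ λ₁a₂, and let (u⋆, v⋆) be the corresponding steady state: (u⋆,v⋆) = ((λ₁μ₂+λ₂a₁)/(μ₁μ₂+a₁a₂), (λ₂μ₁−λ₁a₂)/(μ₁μ₂+a₁a₂)) if λ₂μ₁ > λ₁a₂ and (λ₁/μ₁, 0) otherwise. Then f_u(u⋆,v⋆) < 0 and g_v(u⋆,v⋆) < 0, where f(u,v) = u(λ₁ − μ₁u + a₁v) and g(u,v) = v(λ₂ − μ₂v − a₂u). -/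
/-- If `λ₁, λ₂ ≥ 0`, `a₁, a₂, μ₁, μ₂ > 0` and `λ₂ μ₁ ≠ λ₁ a₂`, then at the corresponding
steady state `(u⋆, v⋆)` one has `f_u(u⋆,v⋆) < 0` and `g_v(u⋆,v⋆) < 0`, where
`f_u(u,v) = λ₁ - 2 μ₁ u + a₁ v` and `g_v(u,v) = λ₂ - 2 μ₂ v - a₂ u`. -/
theorem steady_state_strict_stability
    (l₁ l₂ a₁ a₂ μ₁ μ₂ : ℝ) (hl₁ : 0 ≤ l₁) (hl₂ : 0 ≤ l₂)
    (ha₁ : 0 < a₁) (ha₂ : 0 < a₂) (hμ₁ : 0 < μ₁) (hμ₂ : 0 < μ₂)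
    (hne : l₂ * μ₁ ≠ l₁ * a₂)
    (ustar vstar : ℝ)
    (hstar : (l₁ * a₂ < l₂ * μ₁ ∧
        ustar = (l₁ * μ₂ + l₂ * a₁) / (μ₁ * μ₂ + a₁ * a₂) ∧
        vstar = (l₂ * μ₁ - l₁ * a₂) / (μ₁ * μ₂ + a₁ * a₂)) ∨
      (¬ l₁ * a₂ < l₂ * μ₁ ∧ ustar = l₁ / μ₁ ∧ vstar = 0)) :
    l₁ - 2 * μ₁ * ustar + a₁ * vstar < 0 ∧ l₂ - 2 * μ₂ * vstar - a₂ * ustar < 0 := by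
  have hD : 0 < μ₁ * μ₂ + a₁ * a₂ := by positivity
  rcases hstar with ⟨hlt, hu, hv⟩ | ⟨hge, hu, hv⟩
  · have hl2 : 0 < l₂ := by nlinarith
    subst hu hv
    constructor
    · have h : l₁ - 2 * μ₁ * ((l₁ * μ₂ + l₂ * a₁) / (μ₁ * μ₂ + a₁ * a₂)) +
          a₁ * ((l₂ * μ₁ - l₁ * a₂) / (μ₁ * μ₂ + a₁ * a₂)) =
          (-(μ₁ * (l₁ * μ₂ + l₂ * a₁))) / (μ₁ * μ₂ + a₁ * a₂) := by
        field_simp; ring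
      rw [h]
      apply div_neg_of_neg_of_pos _ hD
      nlinarith
    · have h : l₂ - 2 * μ₂ * ((l₂ * μ₁ - l₁ * a₂) / (μ₁ * μ₂ + a₁ * a₂)) -
          a₂ * ((l₁ * μ₂ + l₂ * a₁) / (μ₁ * μ₂ + a₁ * a₂)) =
          (-(μ₂ * (l₂ * μ₁ - l₁ * a₂))) / (μ₁ * μ₂ + a₁ * a₂) := by
        field_simp; ring
      rw [h]
      apply div_neg_of_neg_of_pos _ hD
      nlinarith
  · have hlt : l₂ * μ₁ < l₁ * a₂ := lt_of_le_of_ne (not_lt.mp hge) hne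
    have hl1 : 0 < l₁ := by nlinarith
    subst hu hv
    constructor
    · have h : l₁ - 2 * μ₁ * (l₁ / μ₁) + a₁ * 0 = -l₁ := by
        field_simp; ring
      rw [h]; linarith
    · have h : l₂ - 2 * μ₂ * 0 - a₂ * (l₁ / μ₁) = (l₂ * μ₁ - a₂ * l₁) / μ₁ := by
        field_simp; ring
      rw [h]
      apply div_neg_of_neg_of_pos _ hμ₁
      nlinarith
end

section
/- Let c₁, c₃, c₄, I₀ > 0. For every t ≥ 0, ∫₀^t e^{−c₁(t−s)} (c₃ I₀^{−1} + c₄ s)^{−2} ds ≤ (I₀²/(c₁ c₃²)) e^{−c₁ t/2} + (√c₁ c₃ I₀^{−1} + (√c₁ c₄/2) t)^{−2}. -/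
open Real intervalIntegral

private lemma exp_integral_aux (c₁ t u v : ℝ) (hc₁ : 0 < c₁) :
    (∫ s in u..v, Real.exp (-c₁ * (t - s)))
      = (Real.exp (-c₁ * (t - v)) - Real.exp (-c₁ * (t - u))) / c₁ := by
  have h : ∀ s : ℝ, HasDerivAt (fun s => Real.exp (-c₁ * (t - s)) / c₁)
      (Real.exp (-c₁ * (t - s))) s := by
    intro s
    have h1 : HasDerivAt (fun s : ℝ => -c₁ * (t - s)) c₁ s := by
      have := ((hasDerivAt_id s).const_sub t).const_mul (-c₁)
      simpa using this
    have h2 := (h1.exp).div_const c₁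
    simpa [mul_div_assoc, mul_div_cancel_right₀, hc₁.ne'] using h2
  rw [intervalIntegral.integral_eq_sub_of_hasDerivAt (fun s _ => h s)]
  · ring
  · exact (Real.continuous_exp.comp (by continuity)).continuousOn.intervalIntegrable

/-- The convolution-type integral estimate from Lemma 4.8:
`∫₀ᵗ e^{-c₁(t-s)} (c₃ I₀⁻¹ + c₄ s)⁻² ds
  ≤ (I₀²/(c₁ c₃²)) e^{-c₁ t/2} + (√c₁ c₃ I₀⁻¹ + (√c₁ c₄ / 2) t)⁻²`. -/
theorem convolution_integral_estimate
    (c₁ c₃ c₄ I₀ : ℝ) (hc₁ : 0 < c₁) (hc₃ : 0 < c₃) (hc₄ : 0 < c₄) (hI₀ : 0 < I₀) :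
    ∀ t : ℝ, 0 ≤ t →
      (∫ s in (0 : ℝ)..t, Real.exp (-c₁ * (t - s)) * ((c₃ * I₀⁻¹ + c₄ * s) ^ 2)⁻¹)
        ≤ I₀ ^ 2 / (c₁ * c₃ ^ 2) * Real.exp (-c₁ * t / 2)
          + ((Real.sqrt c₁ * c₃ * I₀⁻¹ + Real.sqrt c₁ * c₄ / 2 * t) ^ 2)⁻¹ := by
  intro t ht
  set a : ℝ := c₃ * I₀⁻¹ with ha_def
  have ha : 0 < a := mul_pos hc₃ (inv_pos.2 hI₀)
  set f : ℝ → ℝ := fun s => Real.exp (-c₁ * (t - s)) * ((a + c₄ * s) ^ 2)⁻¹ with hf_def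
  have hpos : ∀ s ∈ Set.Icc (0:ℝ) t, 0 < a + c₄ * s := fun s hs =>
    add_pos_of_pos_of_nonneg ha (mul_nonneg hc₄.le hs.1)
  have hcont : ContinuousOn f (Set.Icc 0 t) := by
    apply ContinuousOn.mul
    · exact (Real.continuous_exp.comp (by continuity)).continuousOn
    · exact ContinuousOn.inv₀ (by fun_prop) fun s hs => pow_ne_zero _ (hpos s hs).ne'
  have h1 : Set.uIcc (0:ℝ) (t/2) ⊆ Set.Icc 0 t := by
    rw [Set.uIcc_of_le (by linarith)]; exact Set.Icc_subset_Icc le_rfl (by linarith)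
  have h2 : Set.uIcc (t/2) t ⊆ Set.Icc 0 t := by
    rw [Set.uIcc_of_le (by linarith)]; exact Set.Icc_subset_Icc (by linarith) le_rfl
  have int1 : IntervalIntegrable f MeasureTheory.volume 0 (t/2) :=
    (hcont.mono h1).intervalIntegrable
  have int2 : IntervalIntegrable f MeasureTheory.volume (t/2) t :=
    (hcont.mono h2).intervalIntegrable
  have hsplit : (∫ s in (0:ℝ)..t, f s)
      = (∫ s in (0:ℝ)..(t/2), f s) + ∫ s in (t/2)..t, f s :=
    (intervalIntegral.integral_add_adjacent_intervals int1 int2).symm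
  have intexp : ∀ u v : ℝ, IntervalIntegrable
      (fun s => Real.exp (-c₁ * (t - s))) MeasureTheory.volume u v :=
    fun u v => (Real.continuous_exp.comp (by continuity)).continuousOn.intervalIntegrable
  -- bound on [0, t/2]
  have hb1 : (∫ s in (0:ℝ)..(t/2), f s)
      ≤ (a ^ 2)⁻¹ * ∫ s in (0:ℝ)..(t/2), Real.exp (-c₁ * (t - s)) := by
    rw [← intervalIntegral.integral_const_mul]
    apply intervalIntegral.integral_mono_on (by linarith) int1
      ((intexp 0 (t/2)).const_mul _)
    intro s hs
    have hps : 0 < a + c₄ * s := add_pos_of_pos_of_nonneg ha (mul_nonneg hc₄.le hs.1)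
    have : (( a + c₄ * s) ^ 2)⁻¹ ≤ (a ^ 2)⁻¹ := by
      apply inv_anti₀ (pow_pos ha 2)
      exact pow_le_pow_left₀ ha.le (by nlinarith [mul_nonneg hc₄.le hs.1]) 2
    calc f s ≤ Real.exp (-c₁ * (t - s)) * (a ^ 2)⁻¹ :=
          mul_le_mul_of_nonneg_left this (Real.exp_pos _).le
      _ = (a ^ 2)⁻¹ * Real.exp (-c₁ * (t - s)) := mul_comm _ _
  -- bound on [t/2, t]
  have hb2 : (∫ s in (t/2)..t, f s)
      ≤ ((a + c₄ * (t/2)) ^ 2)⁻¹ * ∫ s in (t/2)..t, Real.exp (-c₁ * (t - s)) := by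
    rw [← intervalIntegral.integral_const_mul]
    apply intervalIntegral.integral_mono_on (by linarith) int2
      ((intexp (t/2) t).const_mul _)
    intro s hs
    have hmid : 0 < a + c₄ * (t/2) := add_pos_of_pos_of_nonneg ha (by positivity)
    have : ((a + c₄ * s) ^ 2)⁻¹ ≤ ((a + c₄ * (t/2)) ^ 2)⁻¹ := by
      apply inv_anti₀ (pow_pos hmid 2)
      apply pow_le_pow_left₀ hmid.le _ 2
      nlinarith [mul_le_mul_of_nonneg_left hs.1 hc₄.le]
    calc f s ≤ Real.exp (-c₁ * (t - s)) * ((a + c₄ * (t/2)) ^ 2)⁻¹ :=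
          mul_le_mul_of_nonneg_left this (Real.exp_pos _).le
      _ = _ := mul_comm _ _
  have hI1 : (∫ s in (0:ℝ)..(t/2), Real.exp (-c₁ * (t - s)))
      ≤ Real.exp (-c₁ * t / 2) / c₁ := by
    rw [exp_integral_aux c₁ t 0 (t/2) hc₁]
    have h : -c₁ * (t - t/2) = -c₁ * t / 2 := by ring
    rw [h]
    have hy : (0:ℝ) < Real.exp (-c₁ * (t - 0)) := Real.exp_pos _
    gcongr
    linarith
  have hI2 : (∫ s in (t/2)..t, Real.exp (-c₁ * (t - s))) ≤ 1 / c₁ := by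
    rw [exp_integral_aux c₁ t (t/2) t hc₁]
    have h1 : Real.exp (-c₁ * (t - t)) = 1 := by norm_num
    have h2 : (0:ℝ) < Real.exp (-c₁ * (t - t/2)) := Real.exp_pos _
    gcongr
    linarith
  have hmid : 0 < a + c₄ * (t/2) := add_pos_of_pos_of_nonneg ha (by positivity)
  have key1 : (a ^ 2)⁻¹ * (Real.exp (-c₁ * t / 2) / c₁)
      = I₀ ^ 2 / (c₁ * c₃ ^ 2) * Real.exp (-c₁ * t / 2) := by
    rw [ha_def]; field_simp
  have key2 : ((a + c₄ * (t/2)) ^ 2)⁻¹ * (1 / c₁)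
      = ((Real.sqrt c₁ * c₃ * I₀⁻¹ + Real.sqrt c₁ * c₄ / 2 * t) ^ 2)⁻¹ := by
    have hs : Real.sqrt c₁ * Real.sqrt c₁ = c₁ := Real.mul_self_sqrt hc₁.le
    have hexp : (Real.sqrt c₁ * c₃ * I₀⁻¹ + Real.sqrt c₁ * c₄ / 2 * t) ^ 2
        = c₁ * (a + c₄ * (t/2)) ^ 2 := by
      have h2 : Real.sqrt c₁ ^ 2 = c₁ := Real.sq_sqrt hc₁.le
      rw [ha_def]; ring_nf; rw [h2]; ring
    rw [hexp, mul_inv]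
    ring
  calc (∫ s in (0:ℝ)..t, f s)
      = (∫ s in (0:ℝ)..(t/2), f s) + ∫ s in (t/2)..t, f s := hsplit
    _ ≤ (a ^ 2)⁻¹ * (Real.exp (-c₁ * t / 2) / c₁)
        + ((a + c₄ * (t/2)) ^ 2)⁻¹ * (1 / c₁) := by
        apply add_le_add
        · exact hb1.trans (mul_le_mul_of_nonneg_left hI1 (by positivity))
        · exact hb2.trans (mul_le_mul_of_nonneg_left hI2 (by positivity))
    _ = _ := by rw [key1, key2]
end
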